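/- Let ε ≥ 0, let 0 = a_1 < … < a_m = n−1 be a 2ε-greedy sequence, and let 0 = b_1 < … < b_k = n−1 be any ε-feasible sequence. Then b_i ≤ a_i for every index i ≤ min(m, k). (Key inductive claim in the proof of Theorem 1: the greedy sequence at error 2ε always stays at least as far ahead as any optimal sequence at error ε.) -/

import Mathlib

/-- The projection value `t s = ⟪p s, u⟫` of the cloud point `p s` onto the direction `u`. -/
noncomputable def projVal {d n : ℕ} (p : Fin n → EuclideanSpace ℝ (Fin d))
    (u : EuclideanSpace ℝ (Fin d)) (s : Fin n) : ℝ :=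
  inner ℝ (p s) u

/-- The point `q(s,i,j)` of the straight segment `[p i, p j]` whose projection
onto `u` equals `t s`. -/
noncomputable def segPoint {d n : ℕ} (p : Fin n → EuclideanSpace ℝ (Fin d))
    (u : EuclideanSpace ℝ (Fin d)) (s i j : Fin n) : EuclideanSpace ℝ (Fin d) :=
  p i + ((projVal p u s - projVal p u i) / (projVal p u j - projVal p u i)) • (p j - p i)

/-- The orthogonal distance `dOrth(s,i,j)` from `p s` to the segment `[p i, p j]`,
measured orthogonally to `u`. -/
noncomputable def dOrth {d n : ℕ} (p : Fin n → EuclideanSpace ℝ (Fin d))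
    (u : EuclideanSpace ℝ (Fin d)) (s i j : Fin n) : ℝ :=
  dist (p s) (segPoint p u s i j)

/-- The orthogonal distance `D(i,j)` from the segment `[p i, p j]` to the cloud:
the maximum of `dOrth(s,i,j)` over `i ≤ s ≤ j` (endpoints contribute `0`). -/
noncomputable def segCloudDist {d n : ℕ} (p : Fin n → EuclideanSpace ℝ (Fin d))
    (u : EuclideanSpace ℝ (Fin d)) (i j : Fin n) : ℝ :=
  (insert (0 : ℝ) ((Finset.Icc i j).image fun s => dOrth p u s i j)).max'
    (Finset.insert_nonempty _ _)

/-- An `ε`-greedy sequence `0 = a_1 < … < a_m = n-1` (here with `m + 1` vertices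
`a 0, …, a (Fin.last m)`): (a) for every step and every `k` with `a_{i-1} < k ≤ a_i`,
`D(a_{i-1}, k) ≤ ε`; (b) for every step with `a_i < n - 1`, `D(a_{i-1}, a_i + 1) > ε`. -/
def IsGreedySeq {d n : ℕ} (p : Fin n → EuclideanSpace ℝ (Fin d))
    (u : EuclideanSpace ℝ (Fin d)) (ε : ℝ) {m : ℕ} (a : Fin (m + 1) → Fin n) : Prop :=
  StrictMono a ∧ (a 0 : ℕ) = 0 ∧ (a (Fin.last m) : ℕ) = n - 1 ∧
  (∀ i : Fin m, ∀ k : Fin n, a i.castSucc < k → k ≤ a i.succ →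
    segCloudDist p u (a i.castSucc) k ≤ ε) ∧
  (∀ i : Fin m, ∀ h : (a i.succ : ℕ) + 1 < n,
    ε < segCloudDist p u (a i.castSucc) ⟨(a i.succ : ℕ) + 1, h⟩)

/-- An `ε`-feasible sequence `0 = b_1 < … < b_k = n-1` (here with `k + 1` vertices):
`D(b_{i-1}, b_i) ≤ ε` for every step. -/
def IsFeasibleSeq {d n : ℕ} (p : Fin n → EuclideanSpace ℝ (Fin d))
    (u : EuclideanSpace ℝ (Fin d)) (ε : ℝ) {k : ℕ} (b : Fin (k + 1) → Fin n) : Prop :=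
  StrictMono b ∧ (b 0 : ℕ) = 0 ∧ (b (Fin.last k) : ℕ) = n - 1 ∧
  ∀ i : Fin k, segCloudDist p u (b i.castSucc) (b i.succ) ≤ ε

lemma dOrth_sandwich {d n : ℕ} (p : Fin n → EuclideanSpace ℝ (Fin d))
    (u : EuclideanSpace ℝ (Fin d)) (hmono : StrictMono (projVal p u))
    {B C i' j' s : Fin n} (hBC : B < C) (hij : i' < j')
    (hsi : i' ≤ s) (hsj : s ≤ j') :
    dOrth p u s i' j' ≤ dOrth p u s B C +
      max (dOrth p u i' B C) (dOrth p u j' B C) := by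
  set t := projVal p u with ht
  set l := (t s - t i') / (t j' - t i') with hl
  have hij' : t i' < t j' := hmono hij
  have hden : t j' - t i' ≠ 0 := by linarith
  have hD : t C - t B ≠ 0 := by have := hmono hBC; linarith
  have hl0 : 0 ≤ l := div_nonneg (by have := hmono.monotone hsi; linarith) (by linarith)
  have hl1 : l ≤ 1 := by
    rw [hl, div_le_one (by linarith)]
    have := hmono.monotone hsj; linarith
  have hts : t s = (1 - l) * t i' + l * t j' := by
    have h1 : l * (t j' - t i') = t s - t i' := by
      rw [hl]; field_simp
    linear_combination -h1
  have key : segPoint p u s B C =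
      (1 - l) • segPoint p u i' B C + l • segPoint p u j' B C := by
    unfold segPoint
    have hcoef : (t s - t B) / (t C - t B) =
        (1 - l) * ((t i' - t B) / (t C - t B)) + l * ((t j' - t B) / (t C - t B)) := by
      rw [hts]; field_simp; ring
    rw [show projVal p u = t from rfl, hcoef]
    module
  have hq : segPoint p u s i' j' = (1 - l) • p i' + l • p j' := by
    unfold segPoint
    rw [show projVal p u = t from rfl, ← hl]
    module
  have hdiff : segPoint p u s B C - segPoint p u s i' j' =
      (1 - l) • (segPoint p u i' B C - p i') + l • (segPoint p u j' B C - p j') := by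
    rw [key, hq]; module
  have htri : dOrth p u s i' j' ≤ dOrth p u s B C +
      dist (segPoint p u s B C) (segPoint p u s i' j') := by
    exact dist_triangle _ _ _
  refine htri.trans (add_le_add_right ?_ _)
  rw [dist_eq_norm, hdiff]
  calc ‖(1 - l) • (segPoint p u i' B C - p i') + l • (segPoint p u j' B C - p j')‖
      ≤ (1 - l) * ‖segPoint p u i' B C - p i'‖ + l * ‖segPoint p u j' B C - p j'‖ := by
        refine (norm_add_le _ _).trans ?_
        rw [norm_smul, norm_smul, Real.norm_eq_abs, Real.norm_eq_abs,
          abs_of_nonneg (by linarith), abs_of_nonneg hl0]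
    _ ≤ (1 - l) * max (dOrth p u i' B C) (dOrth p u j' B C) +
        l * max (dOrth p u i' B C) (dOrth p u j' B C) := by
        have h1 : ‖segPoint p u i' B C - p i'‖ = dOrth p u i' B C := by
          rw [dOrth, dist_eq_norm, norm_sub_rev]
        have h2 : ‖segPoint p u j' B C - p j'‖ = dOrth p u j' B C := by
          rw [dOrth, dist_eq_norm, norm_sub_rev]
        rw [h1, h2]
        gcongr
        · exact le_max_left _ _
        · exact le_max_right _ _
    _ = max (dOrth p u i' B C) (dOrth p u j' B C) := by ring

lemma segCloudDist_sandwich {d n : ℕ} (p : Fin n → EuclideanSpace ℝ (Fin d))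
    (u : EuclideanSpace ℝ (Fin d)) (hmono : StrictMono (projVal p u))
    {B C i' j' : Fin n} (hBC : B < C) (hBi : B ≤ i') (hij : i' < j') (hjC : j' ≤ C)
    {ε : ℝ} (h : segCloudDist p u B C ≤ ε) :
    segCloudDist p u i' j' ≤ 2 * ε := by
  have hbound : ∀ s : Fin n, B ≤ s → s ≤ C → dOrth p u s B C ≤ ε := by
    intro s h1 h2
    refine le_trans (Finset.le_max' _ _ ?_) h
    exact Finset.mem_insert_of_mem (Finset.mem_image_of_mem _ (Finset.mem_Icc.2 ⟨h1, h2⟩))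
  have hε0 : 0 ≤ ε := le_trans (Finset.le_max' _ _ (Finset.mem_insert_self _ _)) h
  refine Finset.max'_le _ _ _ ?_
  intro y hy
  rcases Finset.mem_insert.1 hy with rfl | hy
  · linarith
  · obtain ⟨s, hs, rfl⟩ := Finset.mem_image.1 hy
    rw [Finset.mem_Icc] at hs
    have := dOrth_sandwich p u hmono hBC hij hs.1 hs.2
    have h1 := hbound s (hBi.trans hs.1) (hs.2.trans hjC)
    have h2 := hbound i' hBi (hij.le.trans hjC)
    have h3 := hbound j' (hBi.trans hij.le) hjC
    have : max (dOrth p u i' B C) (dOrth p u j' B C) ≤ ε := max_le h2 h3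
    linarith [dOrth_sandwich p u hmono hBC hij hs.1 hs.2]


/-- Key inductive claim in the proof of Theorem 1: the greedy sequence at error
`2ε` always stays at least as far ahead as any feasible sequence at error `ε`. -/
theorem greedy_stays_ahead {d n : ℕ} (hd : 1 ≤ d) (hn : 2 ≤ n)
    (p : Fin n → EuclideanSpace ℝ (Fin d)) (u : EuclideanSpace ℝ (Fin d))
    (hu : ‖u‖ = 1) (hmono : StrictMono (projVal p u))
    (ε : ℝ) (hε : 0 ≤ ε) {m k : ℕ}
    (a : Fin (m + 1) → Fin n) (b : Fin (k + 1) → Fin n)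
    (ha : IsGreedySeq p u (2 * ε) a) (hb : IsFeasibleSeq p u ε b)
    (i : ℕ) (him : i < m + 1) (hik : i < k + 1) :
    b ⟨i, hik⟩ ≤ a ⟨i, him⟩ := by
  induction i with
  | zero =>
    have h1 : (⟨0, hik⟩ : Fin (k + 1)) = 0 := rfl
    have h2 : (⟨0, him⟩ : Fin (m + 1)) = 0 := rfl
    rw [h1, h2, Fin.le_def, ha.2.1, hb.2.1]
  | succ i ih =>
    have him' : i < m + 1 := Nat.lt_of_succ_lt him
    have hik' : i < k + 1 := Nat.lt_of_succ_lt hik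
    have hba := ih him' hik'
    set I : Fin m := ⟨i, Nat.lt_of_succ_lt_succ him⟩ with hI
    set J : Fin k := ⟨i, Nat.lt_of_succ_lt_succ hik⟩ with hJ
    have haI : a I.castSucc = a ⟨i, him'⟩ := rfl
    have haI' : a I.succ = a ⟨i + 1, him⟩ := rfl
    have hbJ : b J.castSucc = b ⟨i, hik'⟩ := rfl
    have hbJ' : b J.succ = b ⟨i + 1, hik⟩ := rfl
    by_contra hcon
    push_neg at hcon
    -- hcon : a ⟨i+1, him⟩ < b ⟨i+1, hik⟩
    have hlast : (b ⟨i + 1, hik⟩ : ℕ) ≤ n - 1 := by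
      rw [← hb.2.2.1]
      exact Nat.le_of_lt_succ (Nat.lt_succ_of_le
        (hb.1.monotone (Fin.le_last _)))
    have hsucc : (a I.succ : ℕ) + 1 < n := by
      have h1 : (a ⟨i + 1, him⟩ : ℕ) < (b ⟨i + 1, hik⟩ : ℕ) := hcon
      have h2 : (b ⟨i + 1, hik⟩ : ℕ) < n := (b ⟨i + 1, hik⟩).isLt
      omega
    have hg := ha.2.2.2.2 I hsucc
    have hf := hb.2.2.2 J
    have hBC : b J.castSucc < b J.succ := hb.1 (Fin.castSucc_lt_succ : J.castSucc < J.succ)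
    have hBi : b J.castSucc ≤ a I.castSucc := hba
    have hij : a I.castSucc < (⟨(a I.succ : ℕ) + 1, hsucc⟩ : Fin n) := by
      have : a I.castSucc ≤ a I.succ := (ha.1 (Fin.castSucc_lt_succ : I.castSucc < I.succ)).le
      rw [Fin.lt_def]
      simp only [Fin.lt_def, Fin.le_def] at this ⊢
      omega
    have hjC : (⟨(a I.succ : ℕ) + 1, hsucc⟩ : Fin n) ≤ b J.succ := by
      rw [Fin.le_def]
      exact hcon
    have := segCloudDist_sandwich p u hmono hBC hBi hij hjC hf
    linarith
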